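/- The function g(z) = [(1 - e^{2√(-μ)z})·e^{(αs₀+2√(-μ))z}·e^{-i s₀ z}]/(1 + e^{2√(-μ)z})³ (μ < 0, α, s₀ real) has a pole of order three at z = iπ/(2√(-μ)) with residue -[(α-i)²s₀²/(8μ√(-μ))]·exp((α-i)·iπs₀/(2√(-μ))). -/

import Mathlib

open Complex Filter Function FormalMultilinearSeries
open scoped Topology

lemma coeff_fact {f : ℂ → ℂ} {p : FormalMultilinearSeries ℂ ℂ ℂ} {x : ℂ}
    (hp : HasFPowerSeriesAt f p x) (n : ℕ) :
    (n.factorial : ℂ) * p.coeff n = iteratedDeriv n f x := by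
  obtain ⟨r, hr⟩ := hp
  have h := hr.factorial_smul (1 : ℂ) n
  rw [iteratedDeriv_eq_iteratedFDeriv, ← h, nsmul_eq_mul]
  rfl

lemma hde (d z : ℂ) : HasDerivAt (fun w => Complex.exp (d * w)) (d * Complex.exp (d * z)) z := by
  simpa [mul_comm] using ((hasDerivAt_id z).const_mul d).cexp

lemma taylor_step (f : ℂ → ℂ) (x z : ℂ) : f z = f x + (z - x) * dslope f x z := by
  have := sub_smul_dslope f x z
  rw [smul_eq_mul] at this
  linear_combination -this

/-- The meromorphic function
`g(z) = (1 - e^{2√(-μ)z})·e^{(αs₀+2√(-μ))z}·e^{-is₀z}/(1 + e^{2√(-μ)z})³`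
has a pole of order three at `z₀ = iπ/(2√(-μ))` with residue
`-[(α-i)²s₀²/(8μ√(-μ))]·exp((α-i)·iπs₀/(2√(-μ)))`: near `z₀` it decomposes as a
principal part of exact order three whose simple-pole coefficient is the stated residue,
plus an analytic function. -/
theorem melnikov_pole_order_three_residue (α μ s₀ : ℝ) (hμ : μ < 0) :
    ∃ (c₃ c₂ : ℂ) (hfun : ℂ → ℂ),
      c₃ ≠ 0 ∧ AnalyticAt ℂ hfun (Complex.I * Real.pi / (2 * Real.sqrt (-μ))) ∧
      ∀ᶠ z in nhdsWithin (Complex.I * Real.pi / (2 * Real.sqrt (-μ)))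
          {(Complex.I * Real.pi / (2 * Real.sqrt (-μ)))}ᶜ,
        (1 - Complex.exp (2 * Real.sqrt (-μ) * z))
            * Complex.exp ((α * s₀ + 2 * Real.sqrt (-μ)) * z)
            * Complex.exp (-Complex.I * s₀ * z)
            / (1 + Complex.exp (2 * Real.sqrt (-μ) * z)) ^ 3
          = c₃ / (z - Complex.I * Real.pi / (2 * Real.sqrt (-μ))) ^ 3
            + c₂ / (z - Complex.I * Real.pi / (2 * Real.sqrt (-μ))) ^ 2
            + (-(((α : ℂ) - Complex.I) ^ 2 * (s₀ : ℂ) ^ 2 / (8 * μ * Real.sqrt (-μ)))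
                * Complex.exp (((α : ℂ) - Complex.I) * Complex.I * Real.pi * s₀
                    / (2 * Real.sqrt (-μ))))
              / (z - Complex.I * Real.pi / (2 * Real.sqrt (-μ)))
            + hfun z := by
  have hν : (0:ℝ) < Real.sqrt (-μ) := Real.sqrt_pos.mpr (by linarith)
  have hν2 : (Real.sqrt (-μ):ℝ)^2 = -μ := Real.sq_sqrt (by linarith)
  set ν : ℝ := Real.sqrt (-μ) with hνdef
  set c : ℂ := 2 * (ν:ℂ) with hcdef
  set z₀ : ℂ := Complex.I * (Real.pi:ℂ) / c with hz₀def
  have hc : c ≠ 0 := by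
    simp only [hcdef]
    exact mul_ne_zero two_ne_zero (ofReal_ne_zero.mpr hν.ne')
  have hcz₀ : c * z₀ = Real.pi * Complex.I := by
    rw [hz₀def, mul_div_assoc']
    rw [mul_comm c, mul_div_assoc, div_self hc, mul_one, mul_comm]
  have hexp : Complex.exp (c * z₀) = -1 := by rw [hcz₀, Complex.exp_pi_mul_I]
  -- continuation
  set D : ℂ → ℂ := fun z => 1 + Complex.exp (c * z) with hDdef
  have hD' : ∀ z, HasDerivAt D (c * Complex.exp (c * z)) z := fun z => (hde c z).const_add 1
  have derivD : deriv D = fun z => c * Complex.exp (c * z) := funext fun z => (hD' z).deriv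
  have deriv2D : deriv (deriv D) = fun z => c^2 * Complex.exp (c * z) := by
    rw [derivD]
    refine funext fun z => ?_
    have := ((hde c z).const_mul c).deriv
    rw [this]; ring
  have deriv3D : deriv (deriv (deriv D)) = fun z => c^3 * Complex.exp (c * z) := by
    rw [deriv2D]
    refine funext fun z => ?_
    have := ((hde c z).const_mul (c^2)).deriv
    rw [this]; ring
  have hDan : AnalyticAt ℂ D z₀ :=
    analyticAt_const.add ((analyticAt_const.mul analyticAt_id).cexp)
  obtain ⟨pD, hpD⟩ := hDan
  set ψ : ℂ → ℂ := dslope D z₀ with hψdef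
  have hψps : HasFPowerSeriesAt ψ pD.fslope z₀ := hpD.has_fpower_series_dslope_fslope
  have hψan : AnalyticAt ℂ ψ z₀ := ⟨_, hψps⟩
  have hDz₀ : D z₀ = 0 := by simp [hDdef, hexp]
  have hfac : ∀ z, D z = (z - z₀) * ψ z := fun z => by
    have := taylor_step D z₀ z
    rwa [hDz₀, zero_add] at this
  have ψ0 : ψ z₀ = -c := by
    rw [hψdef, dslope_same, derivD]
    show c * Complex.exp (c * z₀) = -c
    rw [hexp]; ring
  have cD2 : pD.coeff 2 = -c^2/2 := by
    have h := coeff_fact hpD 2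
    rw [iteratedDeriv_succ, iteratedDeriv_one, deriv2D] at h
    simp only [hexp] at h
    norm_num at h
    linear_combination h/2
  have cD3 : pD.coeff 3 = -c^3/6 := by
    have h := coeff_fact hpD 3
    rw [iteratedDeriv_succ, iteratedDeriv_succ, iteratedDeriv_one, deriv3D] at h
    simp only [hexp] at h
    norm_num [Nat.factorial] at h
    linear_combination h/6
  have ψ1 : deriv ψ z₀ = -c^2/2 := by
    have h := hψps.deriv
    exact h.trans (coeff_fslope.trans cD2)
  have ψ2 : deriv (deriv ψ) z₀ = -c^3/3 := by
    have h := coeff_fact hψps 2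
    rw [iteratedDeriv_succ, iteratedDeriv_one] at h
    have hco : pD.fslope.coeff 2 = -c^3/6 := coeff_fslope.trans cD3
    rw [hco] at h
    norm_num at h
    linear_combination -h
  -- numerator M
  set β : ℂ := (α:ℂ) * (s₀:ℂ) + c + -Complex.I * (s₀:ℂ) with hβdef
  set M : ℂ → ℂ := fun z => (1 - Complex.exp (c * z)) * Complex.exp (β * z) with hMdef
  set Eβ : ℂ := Complex.exp (β * z₀) with hEβdef
  have hM' : ∀ z, HasDerivAt M
      (-(c * Complex.exp (c * z)) * Complex.exp (β * z)
        + (1 - Complex.exp (c * z)) * (β * Complex.exp (β * z))) z :=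
    fun z => ((hde c z).const_sub 1).mul (hde β z)
  have derivM : deriv M = fun z =>
      -(c * Complex.exp (c * z)) * Complex.exp (β * z)
        + (1 - Complex.exp (c * z)) * (β * Complex.exp (β * z)) :=
    funext fun z => (hM' z).deriv
  have hM'' : ∀ z, HasDerivAt (deriv M)
      ((-(c * (c * Complex.exp (c * z))) * Complex.exp (β * z)
          + -(c * Complex.exp (c * z)) * (β * Complex.exp (β * z)))
        + (-(c * Complex.exp (c * z)) * (β * Complex.exp (β * z))
          + (1 - Complex.exp (c * z)) * (β * (β * Complex.exp (β * z))))) z := by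
    intro z
    rw [derivM]
    exact (((hde c z).const_mul c).neg.mul (hde β z)).add
      (((hde c z).const_sub 1).mul ((hde β z).const_mul β))
  have M0 : M z₀ = 2 * Eβ := by
    show (1 - Complex.exp (c * z₀)) * Complex.exp (β * z₀) = 2 * Eβ
    rw [hexp, ← hEβdef]; ring
  have M1 : deriv M z₀ = (c + 2 * β) * Eβ := by
    rw [derivM]
    show -(c * Complex.exp (c * z₀)) * Complex.exp (β * z₀)
        + (1 - Complex.exp (c * z₀)) * (β * Complex.exp (β * z₀)) = (c + 2 * β) * Eβ
    rw [hexp, ← hEβdef]; ring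
  have M2 : deriv (deriv M) z₀ = (c^2 + 2*c*β + 2*β^2) * Eβ := by
    rw [(hM'' z₀).deriv, hexp, ← hEβdef]; ring
  have hMan : AnalyticAt ℂ M z₀ :=
    (analyticAt_const.sub ((analyticAt_const.mul analyticAt_id).cexp)).mul
      ((analyticAt_const.mul analyticAt_id).cexp)
  -- H = M / ψ³
  set H : ℂ → ℂ := fun z => M z / ψ z ^ 3 with hHdef
  have hψ0ne : ψ z₀ ≠ 0 := by rw [ψ0]; exact neg_ne_zero.mpr hc
  have hHan : AnalyticAt ℂ H z₀ := hMan.div (hψan.pow 3) (pow_ne_zero 3 hψ0ne)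
  obtain ⟨pH, hpH⟩ := hHan
  obtain ⟨U, hUmem, hψU⟩ := hψan.exists_mem_nhds_analyticOnNhd
  have hz₀U : z₀ ∈ U := mem_of_mem_nhds hUmem
  have hψne : ∀ᶠ z in 𝓝 z₀, ψ z ≠ 0 := hψan.continuousAt.eventually_ne hψ0ne
  have hderH : ∀ᶠ z in 𝓝 z₀, deriv H z
      = (deriv M z * ψ z - 3 * M z * deriv ψ z) / ψ z ^ 4 := by
    filter_upwards [hψne, hUmem] with z hz hzU
    have hdψ : HasDerivAt ψ (deriv ψ z) z := (hψU z hzU).differentiableAt.hasDerivAt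
    have hdψ3 : HasDerivAt (fun w => ψ w ^ 3) (3 * ψ z ^ 2 * deriv ψ z) z := by
      simpa using hdψ.fun_pow 3
    have e := ((hM' z).fun_div hdψ3 (pow_ne_zero 3 hz)).deriv
    rw [hHdef]
    rw [e, (hM' z).deriv]
    field_simp
  have hdψ₀ : HasDerivAt ψ (deriv ψ z₀) z₀ := (hψU z₀ hz₀U).differentiableAt.hasDerivAt
  have hdψ'₀ : HasDerivAt (deriv ψ) (deriv (deriv ψ) z₀) z₀ :=
    (hψU.deriv z₀ hz₀U).differentiableAt.hasDerivAt
  have hdM₀ : HasDerivAt M (deriv M z₀) z₀ := (hM' z₀).differentiableAt.hasDerivAt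
  have hdM'₀ : HasDerivAt (deriv M) (deriv (deriv M) z₀) z₀ :=
    (hM'' z₀).differentiableAt.hasDerivAt
  have hdψ4 : HasDerivAt (fun w => ψ w ^ 4) (4 * ψ z₀ ^ 3 * deriv ψ z₀) z₀ := by
    simpa using hdψ₀.fun_pow 4
  have hdG : HasDerivAt (fun z => (deriv M z * ψ z - 3 * M z * deriv ψ z) / ψ z ^ 4)
      ((((deriv (deriv M) z₀ * ψ z₀ + deriv M z₀ * deriv ψ z₀)
          - ((3 * deriv M z₀) * deriv ψ z₀ + (3 * M z₀) * deriv (deriv ψ) z₀)) * ψ z₀ ^ 4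
        - (deriv M z₀ * ψ z₀ - 3 * M z₀ * deriv ψ z₀) * (4 * ψ z₀ ^ 3 * deriv ψ z₀))
        / (ψ z₀ ^ 4) ^ 2) z₀ := by
    have hnum : HasDerivAt (fun z => deriv M z * ψ z - 3 * M z * deriv ψ z)
        ((deriv (deriv M) z₀ * ψ z₀ + deriv M z₀ * deriv ψ z₀)
          - ((3 * deriv M z₀) * deriv ψ z₀ + (3 * M z₀) * deriv (deriv ψ) z₀)) z₀ := by
      have h2 : HasDerivAt (fun z => 3 * M z * deriv ψ z)
          ((3 * deriv M z₀) * deriv ψ z₀ + (3 * M z₀) * deriv (deriv ψ) z₀) z₀ := by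
        simpa [mul_assoc] using (hdM₀.const_mul 3).fun_mul hdψ'₀
      exact (hdM'₀.mul hdψ₀).sub h2
    exact hnum.div hdψ4 (pow_ne_zero 4 hψ0ne)
  have key : deriv (deriv H) z₀
      = (((deriv (deriv M) z₀ * ψ z₀ + deriv M z₀ * deriv ψ z₀)
          - ((3 * deriv M z₀) * deriv ψ z₀ + (3 * M z₀) * deriv (deriv ψ) z₀)) * ψ z₀ ^ 4
        - (deriv M z₀ * ψ z₀ - 3 * M z₀ * deriv ψ z₀) * (4 * ψ z₀ ^ 3 * deriv ψ z₀))
        / (ψ z₀ ^ 4) ^ 2 :=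
    (Filter.EventuallyEq.deriv_eq hderH).trans hdG.deriv
  -- residue value
  have h2 := coeff_fact hpH 2
  rw [iteratedDeriv_succ, iteratedDeriv_one, key, M0, M1, M2, ψ0, ψ1, ψ2] at h2
  norm_num at h2
  have hden : (((c ^ 4) ^ 2 : ℂ)) ≠ 0 := pow_ne_zero 2 (pow_ne_zero 4 hc)
  replace h2 := (eq_div_iff hden).mp h2
  have hval' : pH.coeff 2 * c ^ 8 * 2 = -((β - c) ^ 2 * Eβ) * c ^ 5 * 2 := by
    linear_combination h2
  have hval : pH.coeff 2 = -((β - c) ^ 2 * Eβ) / c ^ 3 := by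
    rw [eq_div_iff (pow_ne_zero 3 hc)]
    exact mul_right_cancel₀ (pow_ne_zero 5 hc) (by linear_combination hval' / 2)
  set T : ℂ := Complex.exp (((α:ℂ) - Complex.I) * Complex.I * (Real.pi:ℂ) * (s₀:ℂ) / c)
    with hTdef
  have hEβT : Eβ = -T := by
    rw [hEβdef, hTdef]
    have harg : β * z₀ = ((α:ℂ) - Complex.I) * Complex.I * (Real.pi:ℂ) * (s₀:ℂ) / c
        + Real.pi * Complex.I := by
      rw [hβdef, hz₀def]
      field_simp
      ring
    rw [harg, Complex.exp_add, Complex.exp_pi_mul_I]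
    ring
  have hμν : (μ:ℂ) = -((ν:ℂ))^2 := by
    have : μ = -(ν^2) := by linarith
    rw [this]; push_cast; ring
  have hν0 : ((ν:ℝ):ℂ) ≠ 0 := ofReal_ne_zero.mpr hν.ne'
  have hres : -(((α:ℂ) - Complex.I) ^ 2 * ((s₀:ℂ)) ^ 2 / (8 * (μ:ℂ) * ((ν:ℝ):ℂ))) * T
      = pH.coeff 2 := by
    rw [hval, hEβT, hμν, hβdef, hcdef]
    field_simp
    ring
  -- assembly
  set H₁ : ℂ → ℂ := dslope H z₀ with hH₁def
  set H₂ : ℂ → ℂ := dslope H₁ z₀ with hH₂def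
  set H₃ : ℂ → ℂ := dslope H₂ z₀ with hH₃def
  have hpH1 : HasFPowerSeriesAt H₁ pH.fslope z₀ := hpH.has_fpower_series_dslope_fslope
  have hpH2 : HasFPowerSeriesAt H₂ pH.fslope.fslope z₀ := hpH1.has_fpower_series_dslope_fslope
  have hpH3 := hpH2.has_fpower_series_dslope_fslope
  have hH2z₀ : H₂ z₀ = pH.coeff 2 := by
    have e0 : pH.fslope.fslope.coeff 0 = H₂ z₀ := hpH2.coeff_zero 1
    have e1 : pH.fslope.fslope.coeff 0 = pH.coeff 2 := by
      rw [coeff_fslope, coeff_fslope]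
    rw [← e0, e1]
  refine ⟨H z₀, H₁ z₀, H₃, ?_, ⟨_, hpH3⟩, ?_⟩
  · show M z₀ / ψ z₀ ^ 3 ≠ 0
    refine div_ne_zero ?_ (pow_ne_zero 3 hψ0ne)
    rw [M0]
    exact mul_ne_zero two_ne_zero (by rw [hEβdef]; exact Complex.exp_ne_zero _)
  · have hψne' : ∀ᶠ z in 𝓝[≠] z₀, ψ z ≠ 0 := hψne.filter_mono nhdsWithin_le_nhds
    filter_upwards [hψne', self_mem_nhdsWithin] with z hz hzc
    have hzz : z ≠ z₀ := hzc
    have hw : z - z₀ ≠ 0 := sub_ne_zero.mpr hzz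
    rw [hres, ← hH2z₀]
    have hsplit : Complex.exp (((α:ℂ) * (s₀:ℂ) + c) * z) * Complex.exp (-Complex.I * (s₀:ℂ) * z)
        = Complex.exp (β * z) := by
      rw [← Complex.exp_add]; congr 1; rw [hβdef]; ring
    rw [mul_assoc, hsplit]
    have hDz : (1 + Complex.exp (c * z)) = (z - z₀) * ψ z := hfac z
    rw [hDz]
    have hMz : (1 - Complex.exp (c * z)) * Complex.exp (β * z) = H z * ψ z ^ 3 := by
      rw [show H z = M z / ψ z ^ 3 from rfl, div_mul_cancel₀ _ (pow_ne_zero 3 hz)]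
    rw [hMz]
    have eH : H z = H z₀ + (z - z₀) * H₁ z₀ + (z - z₀)^2 * H₂ z₀ + (z - z₀)^3 * H₃ z := by
      have e1 := taylor_step H z₀ z
      have e2 := taylor_step H₁ z₀ z
      have e3 := taylor_step H₂ z₀ z
      rw [← hH₁def] at e1
      rw [← hH₂def] at e2
      rw [← hH₃def] at e3
      linear_combination e1 + (z - z₀) * e2 + (z - z₀)^2 * e3
    rw [eH]
    field_simp
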